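/- Let H be a Hilbert space, f ∈ H', p > 2, and let Φ(u) = ½‖u‖² − (1/p) G(u) − f(u) where G(u) ≥ 0 is p-homogeneous (G(λu) = λ^p G(u) for λ ≥ 0). If (u_n) is a sequence with Φ(u_n) → β and Φ'(u_n)u_n = o(‖u_n‖) + o(1), then (u_n) is bounded in H. -/

import Mathlib

open Filter Topology

theorem stmt_16 {H : Type*} [NormedAddCommGroup H] [InnerProductSpace ℝ H]
    (f : H →L[ℝ] ℝ) (p : ℝ) (hp : 2 < p)
    (G : H → ℝ) (hG0 : ∀ u, 0 ≤ G u)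
    (hGhom : ∀ (l : ℝ) (u : H), 0 ≤ l → G (l • u) = l ^ p * G u)
    (β : ℝ) (u : ℕ → H)
    (hΦ : Tendsto (fun n => (1 / 2) * ‖u n‖ ^ 2 - (1 / p) * G (u n) - f (u n))
      atTop (𝓝 β))
    (ε : ℕ → ℝ) (hε0 : ∀ n, 0 ≤ ε n) (hε : Tendsto ε atTop (𝓝 0))
    (hderiv : ∀ n, |‖u n‖ ^ 2 - G (u n) - f (u n)| ≤ ε n * ‖u n‖ + ε n) :
    ∃ M : ℝ, ∀ n, ‖u n‖ ≤ M := by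
  obtain ⟨B, hB⟩ := hΦ.bddAbove_range
  obtain ⟨E, hE⟩ := hε.bddAbove_range
  have hBn : ∀ n, (1 / 2) * ‖u n‖ ^ 2 - (1 / p) * G (u n) - f (u n) ≤ B :=
    fun n => hB ⟨n, rfl⟩
  have hEn : ∀ n, ε n ≤ E := fun n => hE ⟨n, rfl⟩
  have hE0 : 0 ≤ E := le_trans (hε0 0) (hEn 0)
  have hp0 : (0 : ℝ) < p := by linarith
  have hc : (0 : ℝ) < p / 2 - 1 := by linarith
  have hB0 : (0 : ℝ) ≤ max B 0 := le_max_right _ _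
  refine ⟨max 1 ((p * max B 0 + 2 * E + (p - 1) * ‖f‖) / (p / 2 - 1)), fun n => ?_⟩
  have ha0 : (0 : ℝ) ≤ ‖u n‖ := norm_nonneg _
  have hfe : f (u n) ≤ ‖f‖ * ‖u n‖ := by
    calc f (u n) ≤ |f (u n)| := le_abs_self _
    _ = ‖f (u n)‖ := (Real.norm_eq_abs _).symm
    _ ≤ ‖f‖ * ‖u n‖ := f.le_opNorm (u n)
  have h1 : -(ε n * ‖u n‖ + ε n) ≤ ‖u n‖ ^ 2 - G (u n) - f (u n) :=
    (abs_le.mp (hderiv n)).1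
  have hPhi : (1 / 2) * ‖u n‖ ^ 2 - (1 / p) * G (u n) - f (u n) ≤ max B 0 :=
    le_trans (hBn n) (le_max_left _ _)
  have hmul : p / 2 * ‖u n‖ ^ 2 - G (u n) - p * f (u n) ≤ p * max B 0 := by
    have h := mul_le_mul_of_nonneg_left hPhi hp0.le
    have hexp : p * ((1 / 2) * ‖u n‖ ^ 2 - (1 / p) * G (u n) - f (u n))
        = p / 2 * ‖u n‖ ^ 2 - G (u n) - p * f (u n) := by
      field_simp
    linarith [hexp ▸ h]
  have hkey : (p / 2 - 1) * ‖u n‖ ^ 2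
      ≤ p * max B 0 + (ε n * ‖u n‖ + ε n) + (p - 1) * f (u n) := by
    nlinarith [hmul, h1]
  have hεa : ε n * ‖u n‖ ≤ E * ‖u n‖ := mul_le_mul_of_nonneg_right (hEn n) ha0
  have hff : (p - 1) * f (u n) ≤ (p - 1) * (‖f‖ * ‖u n‖) :=
    mul_le_mul_of_nonneg_left hfe (by linarith)
  by_cases h1a : ‖u n‖ ≤ 1
  · exact le_max_of_le_left h1a
  · push_neg at h1a
    have hCa : (p / 2 - 1) * ‖u n‖ ^ 2
        ≤ (p * max B 0 + 2 * E + (p - 1) * ‖f‖) * ‖u n‖ := by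
      have hb : p * max B 0 ≤ p * max B 0 * ‖u n‖ := by
        nlinarith [mul_nonneg hp0.le hB0]
      have he2 : ε n ≤ E * ‖u n‖ := by
        nlinarith [hEn n, hE0]
      nlinarith [hεa, hff, hkey]
    have haC : ‖u n‖ ≤ (p * max B 0 + 2 * E + (p - 1) * ‖f‖) / (p / 2 - 1) := by
      rw [le_div_iff₀ hc]
      nlinarith [hCa, h1a]
    exact le_max_of_le_right haC
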